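/- arXiv:2410.22130 — 5 statements merged into one kernel-verified Lean document; each statement's English description precedes it below -/
import Mathlib

section
/- For the epistemic program Π consisting of the rules {aᵢ ← ¬K n_aᵢ : 1≤i≤n} ∪ {n_aᵢ ← ¬aᵢ : 1≤i≤n} ∪ {g ← aᵢ : 1≤i≤n} ∪ {⊥ ← Kg}, the unique worldview is W = {{n_a₁,...,n_aₙ}} (the singleton set containing the interpretation making all n_aᵢ true and all aᵢ and g false). -/
/-! Framework for (epistemic) logic programs:
objective literals, rules, programs, reducts, stable models,
subjective literals, subjective reducts, worldviews, and the
generate-and-test programs T₀, G₀, kp, G₁. -/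

/-- Extended objective literals over an atom type `α`:
an atom, a negated atom, a doubly negated atom, or a truth constant. -/
inductive Lit (α : Type) : Type
  | pos (a : α)
  | neg (a : α)
  | nneg (a : α)
  | top
  | bot

namespace Lit

/-- Satisfaction of an extended objective literal by an interpretation. -/
def sat {α : Type} (I : Set α) : Lit α → Prop
  | .pos a => a ∈ I
  | .neg a => a ∉ I
  | .nneg a => a ∈ I
  | .top => True
  | .bot => False

/-- A literal is negated if it is of the form `¬a` or `¬¬a`. -/
def isNeg {α : Type} : Lit α → Prop
  | .neg _ => True
  | .nneg _ => True
  | _ => False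

/-- Rename atoms in a literal. -/
def map {α β : Type} (f : α → β) : Lit α → Lit β
  | .pos a => .pos (f a)
  | .neg a => .neg (f a)
  | .nneg a => .nneg (f a)
  | .top => .top
  | .bot => .bot

/-- The atoms occurring in a literal. -/
def atoms {α : Type} : Lit α → Set α
  | .pos a => {a}
  | .neg a => {a}
  | .nneg a => {a}
  | _ => ∅

end Lit

/-- An objective rule `a₁ ∨ ... ∨ aₙ ← L₁,...,Lₘ`. -/
structure Rule (α : Type) where
  head : Set α
  body : Set (Lit α)

/-- An objective program: a set of rules. -/
abbrev Program (α : Type) := Set (Rule α)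

/-- A rule is satisfied by `I` if `I` satisfies some head atom
whenever it satisfies all body literals. -/
def Rule.sat {α : Type} (I : Set α) (r : Rule α) : Prop :=
  (∀ L ∈ r.body, L.sat I) → ∃ a ∈ r.head, a ∈ I

/-- A model of a program satisfies all its rules. -/
def isModel {α : Type} (I : Set α) (P : Program α) : Prop := ∀ r ∈ P, r.sat I

/-- The reduct of a program with respect to `I`: drop rules with an unsatisfied
negated body literal; delete negated literals from the remaining rules. -/
def reduct {α : Type} (P : Program α) (I : Set α) : Program α :=
  { r' | ∃ r ∈ P, (∀ L ∈ r.body, L.isNeg → L.sat I) ∧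
      r' = ⟨r.head, {L | L ∈ r.body ∧ ¬ L.isNeg}⟩ }

/-- `I` is a stable model of `P` iff it is a ⊆-minimal model of the reduct `P^I`. -/
def isStable {α : Type} (P : Program α) (I : Set α) : Prop :=
  isModel I (reduct P I) ∧ ∀ J ⊆ I, isModel J (reduct P I) → J = I

/-- The set of stable models of a program. -/
def SM {α : Type} (P : Program α) : Set (Set α) := { I | isStable P I }

/-- A program extended with assumption constraints `⊥ ← ¬a` (for `a ∈ Apos`)
and `⊥ ← a` (for `a ∈ Aneg`). -/
def withAssumption {α : Type} (P : Program α) (Apos Aneg : Set α) : Program α :=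
  P ∪ ((fun a => (⟨∅, {Lit.neg a}⟩ : Rule α)) '' Apos)
    ∪ ((fun a => (⟨∅, {Lit.pos a}⟩ : Rule α)) '' Aneg)

/-- Stable models of `P` under an assumption. -/
def SMA {α : Type} (P : Program α) (Apos Aneg : Set α) : Set (Set α) :=
  SM (withAssumption P Apos Aneg)

/-- Literals of epistemic programs: an objective literal, or a subjective
atom `K l` preceded by zero, one, or two negations. -/
inductive SLit (α : Type) : Type
  | obj (l : Lit α)
  | k (l : Lit α)
  | nk (l : Lit α)
  | nnk (l : Lit α)

/-- An epistemic rule. -/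
structure ERule (α : Type) where
  head : Set α
  body : Set (SLit α)

/-- An epistemic program: a set of epistemic rules. -/
abbrev EProgram (α : Type) := Set (ERule α)

/-- `W ⊨ K l`: every interpretation in `W` satisfies `l`. -/
def satK {α : Type} (W : Set (Set α)) (l : Lit α) : Prop := ∀ I ∈ W, l.sat I

open scoped Classical in
/-- Replace a subjective literal by `⊤`/`⊥` according to `W`; objective
literals are unchanged. -/
noncomputable def SLit.reduce {α : Type} (W : Set (Set α)) : SLit α → Lit α
  | .obj l => l
  | .k l => if satK W l then .top else .bot
  | .nk l => if satK W l then .bot else .top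
  | .nnk l => if satK W l then .top else .bot

/-- The subjective reduct `P^W`. -/
noncomputable def subjReduct {α : Type} (P : EProgram α) (W : Set (Set α)) : Program α :=
  (fun r : ERule α => (⟨r.head, (SLit.reduce W) '' r.body⟩ : Rule α)) '' P

/-- A worldview: a non-empty set of interpretations `W` with `W = SM(P^W)`. -/
def isWorldview {α : Type} (P : EProgram α) (W : Set (Set α)) : Prop :=
  W.Nonempty ∧ W = SM (subjReduct P W)

/-- Normal-form subjective literals: `K a`, `¬K a`, `¬¬K a` with `a` an atom. -/
def SLit.isNormal {α : Type} : SLit α → Prop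
  | .obj _ => True
  | .k (.pos _) => True
  | .nk (.pos _) => True
  | .nnk (.pos _) => True
  | _ => False

/-- A program is in normal form if negation does not occur in the scope of `K`. -/
def isNormalForm {α : Type} (P : EProgram α) : Prop :=
  ∀ r ∈ P, ∀ L ∈ r.body, L.isNormal

/-- The atoms `a` such that a subjective atom `K a` occurs in the program; the
corresponding fresh atoms `ka` are represented as `Sum.inr a`. -/
def KAtoms {α : Type} (P : EProgram α) : Set α :=
  { a | ∃ r ∈ P, SLit.k (Lit.pos a) ∈ r.body ∨ SLit.nk (Lit.pos a) ∈ r.body ∨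
        SLit.nnk (Lit.pos a) ∈ r.body }

/-- Replace subjective literals on `K a` by objective literals on the fresh
atom `ka = Sum.inr a`; original atoms become `Sum.inl a`. -/
def SLit.t0 {α : Type} : SLit α → Lit (α ⊕ α)
  | .obj l => l.map Sum.inl
  | .k (.pos a) => .pos (Sum.inr a)
  | .nk (.pos a) => .neg (Sum.inr a)
  | .nnk (.pos a) => .nneg (Sum.inr a)
  | _ => .bot

/-- The tester program `T₀(P)`: `k(P)` plus a choice rule `{ka}`
(i.e. `ka ← ¬¬ka`) for each `ka ∈ K(P)`. -/
def T0 {α : Type} (P : EProgram α) : Program (α ⊕ α) :=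
  ((fun r : ERule α => (⟨Sum.inl '' r.head, SLit.t0 '' r.body⟩ : Rule (α ⊕ α))) '' P)
  ∪ ((fun a => (⟨{Sum.inr a}, {Lit.nneg (Sum.inr a)}⟩ : Rule (α ⊕ α))) '' KAtoms P)

/-- The generator program `G₀(P)`: `T₀(P)` plus consistency constraints
`⊥ ← ka, ¬a` for each `ka ∈ K(P)`. -/
def G0 {α : Type} (P : EProgram α) : Program (α ⊕ α) :=
  T0 P ∪ ((fun a => (⟨∅, {Lit.pos (Sum.inr a), Lit.neg (Sum.inl a)}⟩ : Rule (α ⊕ α))) '' KAtoms P)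

/-- `k(M) = M ∩ K(P)`, read as a set of original atoms. -/
def kOfM {α : Type} (M : Set (α ⊕ α)) : Set α := { a | Sum.inr a ∈ M }

/-- `k(W) = {ka ∈ K(P) : W ⊨ K a}`, read as a set of original atoms. -/
def kOfW {α : Type} (P : EProgram α) (W : Set (Set α)) : Set α :=
  { a | a ∈ KAtoms P ∧ ∀ I ∈ W, a ∈ I }

/-- Restriction of an interpretation to the original atoms `At(P)`. -/
def restr {α : Type} (M : Set (α ⊕ α)) : Set α := { a | Sum.inl a ∈ M }

/-- The positive part of the assumption determined by a set `S` of K-atoms: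
`ka` for each `ka ∈ K(P)` with `a ∈ S`. -/
def asmP {α : Type} (P : EProgram α) (S : Set α) : Set (α ⊕ α) := Sum.inr '' (S ∩ KAtoms P)

/-- The negative part of the assumption determined by a set `S` of K-atoms:
`¬ka` for each `ka ∈ K(P)` with `a ∉ S`. -/
def asmN {α : Type} (P : EProgram α) (S : Set α) : Set (α ⊕ α) := Sum.inr '' (KAtoms P \ S)

/-- A generator program for `P`. -/
def isGenerator {α : Type} (P : EProgram α) (G : Program (α ⊕ α)) : Prop :=
  (∀ W, isWorldview P W → ∃ M ∈ SM G, kOfM M = kOfW P W ∧ restr M ∈ W) ∧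
  (∀ M ∈ SM G, ∀ W : Set (Set α), kOfW P W = kOfM M → restr M ∈ SM (subjReduct P W))

/-- A tester program for `P`: a non-empty `W` is a worldview of `P` iff
`W` equals the restriction to `At(P)` of `SM(T; k(W))`. -/
def isTester {α : Type} (P : EProgram α) (T : Program (α ⊕ α)) : Prop :=
  ∀ W : Set (Set α), W.Nonempty →
    (isWorldview P W ↔ W = restr '' SMA T (asmP P (kOfW P W)) (asmN P (kOfW P W)))

/-- Atoms of the extended signature for the propagation program: original
atoms and `ka`-atoms (left) plus fresh atoms `kp_a`, `kn_a`, `kn_r` (right). -/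
abbrev PExt (α : Type) : Type := (α ⊕ α) ⊕ (α ⊕ (α ⊕ ERule α))

/-- An original atom `a` in the extended signature. -/
def aE {α : Type} (a : α) : PExt α := Sum.inl (Sum.inl a)

/-- The atom `ka` in the extended signature. -/
def kaE {α : Type} (a : α) : PExt α := Sum.inl (Sum.inr a)

/-- The fresh propagation atom `kp_a`. -/
def kpA {α : Type} (a : α) : PExt α := Sum.inr (Sum.inl a)

/-- The fresh propagation atom `kn_a`. -/
def knA {α : Type} (a : α) : PExt α := Sum.inr (Sum.inr (Sum.inl a))

/-- The fresh propagation atom `kn_r` for a rule `r`. -/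
def knR {α : Type} (r : ERule α) : PExt α := Sum.inr (Sum.inr (Sum.inr r))

/-- Translation of a body literal for the rules defining `kp_a`. -/
def SLit.kpBody {α : Type} : SLit α → Lit (PExt α)
  | .obj (.pos a) => .pos (kpA a)
  | .obj (.neg a) => .pos (knA a)
  | .k (.pos a) => .pos (kaE a)
  | .nk (.pos a) => .neg (kaE a)
  | .nnk (.pos a) => .nneg (kaE a)
  | _ => .bot

/-- Translation of a body literal for the rules defining `kn_r`
(the "complement" of the literal). -/
def SLit.knBody {α : Type} : SLit α → Lit (PExt α)
  | .obj (.pos a) => .pos (knA a)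
  | .obj (.neg a) => .pos (kpA a)
  | .k (.pos a) => .neg (kaE a)
  | .nk (.pos a) => .pos (kaE a)
  | .nnk (.pos a) => .neg (kaE a)
  | _ => .top

/-- The atoms occurring in a subjective literal. -/
def SLit.atoms {α : Type} : SLit α → Set α
  | .obj l => l.atoms
  | .k l => l.atoms
  | .nk l => l.atoms
  | .nnk l => l.atoms

/-- The atoms occurring in an epistemic program. -/
def AtE {α : Type} (P : EProgram α) : Set α :=
  { a | ∃ r ∈ P, a ∈ r.head ∨ ∃ L ∈ r.body, a ∈ L.atoms }

/-- The epistemic-propagation program `kp(P)`: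
rules `kp_{a} ← ...` for single-atom-head rules, rules `kn_r ← ...` for all
rules, and completion rules `kn_a ← kn_{r₁},...,kn_{rₖ}`. -/
def kpProg {α : Type} (P : EProgram α) : Program (PExt α) :=
  { r' | ∃ r ∈ P, ∃ a : α, r.head = {a} ∧ r' = ⟨{kpA a}, SLit.kpBody '' r.body⟩ }
  ∪ { r' | ∃ r ∈ P, ∃ L ∈ r.body, r' = ⟨{knR r}, {L.knBody}⟩ }
  ∪ { r' | ∃ a ∈ AtE P,
        r' = ⟨{knA a}, (fun r => Lit.pos (knR r)) '' { r ∈ P | a ∈ r.head }⟩ }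

/-- Rename the atoms of a rule. -/
def Rule.mapAtoms {α β : Type} (f : α → β) (r : Rule α) : Rule β :=
  ⟨f '' r.head, (Lit.map f) '' r.body⟩

/-- `G₀(P)` viewed over the extended signature. -/
def G0ext {α : Type} (P : EProgram α) : Program (PExt α) :=
  (Rule.mapAtoms Sum.inl) '' (G0 P)

/-- The generator program `G₁(P)`: `G₀(P)` together with the propagation
program `kp(P)` and consistency constraints `⊥ ← kp_a, ¬ka`. -/
def G1 {α : Type} (P : EProgram α) : Program (PExt α) :=
  G0ext P ∪ kpProg P
  ∪ { r' | ∃ a ∈ KAtoms P, r' = ⟨∅, {Lit.pos (kpA a), Lit.neg (kaE a)}⟩ }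

/-- Atoms `a₁,...,aₙ`, `n_a₁,...,n_aₙ`, `g`. -/
inductive At7 (n : ℕ) : Type
  | a (i : Fin n)
  | na (i : Fin n)
  | g

/-- The program `{aᵢ ← ¬K n_aᵢ; n_aᵢ ← ¬aᵢ; g ← aᵢ : 1 ≤ i ≤ n} ∪ {⊥ ← K g}`. -/
def Prog7 (n : ℕ) : EProgram (At7 n) :=
  { r | ∃ i : Fin n, r = ⟨{At7.a i}, {SLit.nk (Lit.pos (At7.na i))}⟩ }
  ∪ { r | ∃ i : Fin n, r = ⟨{At7.na i}, {SLit.obj (Lit.neg (At7.a i))}⟩ }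
  ∪ { r | ∃ i : Fin n, r = ⟨{At7.g}, {SLit.obj (Lit.pos (At7.a i))}⟩ }
  ∪ { (⟨∅, {SLit.k (Lit.pos At7.g)}⟩ : ERule (At7 n)) }

namespace Prog7Aux

/-- Membership in `Prog7` unfolded. -/
lemma mem_Prog7 {n : ℕ} {r : ERule (At7 n)} :
    r ∈ Prog7 n ↔
      (∃ i : Fin n, r = ⟨{At7.a i}, {SLit.nk (Lit.pos (At7.na i))}⟩) ∨
      (∃ i : Fin n, r = ⟨{At7.na i}, {SLit.obj (Lit.neg (At7.a i))}⟩) ∨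
      (∃ i : Fin n, r = ⟨{At7.g}, {SLit.obj (Lit.pos (At7.a i))}⟩) ∨
      r = (⟨∅, {SLit.k (Lit.pos At7.g)}⟩ : ERule (At7 n)) := by
  simp only [Prog7, Set.mem_union, Set.mem_setOf_eq, Set.mem_singleton_iff]
  tauto

lemma mem_reduct_of_noNeg {α : Type} {P : Program α} {I : Set α} {r : Rule α}
    (hr : r ∈ P) (h2 : ∀ L ∈ r.body, ¬ L.isNeg) : r ∈ reduct P I := by
  refine ⟨r, hr, fun L hL hN => absurd hN (h2 L hL), ?_⟩
  cases r with
  | mk hd bd =>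
    congr 1
    ext L
    exact ⟨fun h => ⟨h, h2 L h⟩, fun h => h.1⟩

lemma mem_subjReduct {α : Type} {P : EProgram α} {W : Set (Set α)} {r : ERule α}
    (hr : r ∈ P) : (⟨r.head, SLit.reduce W '' r.body⟩ : Rule α) ∈ subjReduct P W :=
  ⟨r, hr, rfl⟩

/-- The candidate unique stable model of the subjective reduct. -/
def MA (n : ℕ) (W : Set (Set (At7 n))) : Set (At7 n) :=
  {x | (∃ i : Fin n, ¬ satK W (Lit.pos (At7.na i)) ∧ x = At7.a i) ∨
       (∃ i : Fin n, satK W (Lit.pos (At7.na i)) ∧ x = At7.na i) ∨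
       (x = At7.g ∧ ∃ i : Fin n, ¬ satK W (Lit.pos (At7.na i)))}

lemma mem_a_MA {n : ℕ} {W : Set (Set (At7 n))} {i : Fin n} :
    At7.a i ∈ MA n W ↔ ¬ satK W (Lit.pos (At7.na i)) := by
  simp [MA]

lemma mem_na_MA {n : ℕ} {W : Set (Set (At7 n))} {i : Fin n} :
    At7.na i ∈ MA n W ↔ satK W (Lit.pos (At7.na i)) := by
  simp [MA]

lemma mem_g_MA {n : ℕ} {W : Set (Set (At7 n))} :
    At7.g ∈ MA n W ↔ ∃ i : Fin n, ¬ satK W (Lit.pos (At7.na i)) := by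
  simp [MA]

/-- Characterization of models of the reduct of the subjective reduct of `Prog7`. -/
lemma model_iff {n : ℕ} (W : Set (Set (At7 n))) (I J : Set (At7 n)) :
    isModel J (reduct (subjReduct (Prog7 n) W) I) ↔
      ((∀ i : Fin n, ¬ satK W (Lit.pos (At7.na i)) → At7.a i ∈ J) ∧
       (∀ i : Fin n, At7.a i ∉ I → At7.na i ∈ J) ∧
       (∀ i : Fin n, At7.a i ∈ J → At7.g ∈ J) ∧
       ¬ satK W (Lit.pos At7.g)) := by
  constructor
  · intro h
    refine ⟨?_, ?_, ?_, ?_⟩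
    · intro i hns
      have hmem : (⟨{At7.a i}, {Lit.top}⟩ : Rule (At7 n)) ∈
          reduct (subjReduct (Prog7 n) W) I := by
        apply mem_reduct_of_noNeg (P := subjReduct (Prog7 n) W)
        · have := mem_subjReduct (W := W)
            (r := (⟨{At7.a i}, {SLit.nk (Lit.pos (At7.na i))}⟩ : ERule (At7 n)))
            (by rw [mem_Prog7]; exact Or.inl ⟨i, rfl⟩)
          simpa [SLit.reduce, hns] using this
        · intro L hL
          simp only [Set.mem_singleton_iff] at hL
          subst hL; simp [Lit.isNeg]
      have := h _ hmem (by intro L hL; simp only [Set.mem_singleton_iff] at hL; subst hL; trivial)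
      simpa using this
    · intro i hai
      have hmem : (⟨{At7.na i}, ∅⟩ : Rule (At7 n)) ∈
          reduct (subjReduct (Prog7 n) W) I := by
        refine ⟨⟨{At7.na i}, {Lit.neg (At7.a i)}⟩, ?_, ?_, ?_⟩
        · have := mem_subjReduct (W := W)
            (r := (⟨{At7.na i}, {SLit.obj (Lit.neg (At7.a i))}⟩ : ERule (At7 n)))
            (by rw [mem_Prog7]; exact Or.inr (Or.inl ⟨i, rfl⟩))
          simpa [SLit.reduce] using this
        · intro L hL
          simp only [Set.mem_singleton_iff] at hL
          subst hL; intro _; exact hai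
        · congr 1
          ext L
          simp [Lit.isNeg]
          rintro rfl
          simp [Lit.isNeg]
      have := h _ hmem (by intro L hL; simp at hL)
      simpa using this
    · intro i hai
      have hmem : (⟨{At7.g}, {Lit.pos (At7.a i)}⟩ : Rule (At7 n)) ∈
          reduct (subjReduct (Prog7 n) W) I := by
        apply mem_reduct_of_noNeg (P := subjReduct (Prog7 n) W)
        · have := mem_subjReduct (W := W)
            (r := (⟨{At7.g}, {SLit.obj (Lit.pos (At7.a i))}⟩ : ERule (At7 n)))
            (by rw [mem_Prog7]; exact Or.inr (Or.inr (Or.inl ⟨i, rfl⟩)))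
          simpa [SLit.reduce] using this
        · intro L hL
          simp only [Set.mem_singleton_iff] at hL
          subst hL; simp [Lit.isNeg]
      have := h _ hmem (by
        intro L hL; simp only [Set.mem_singleton_iff] at hL; subst hL
        exact hai)
      simp at this
      exact this
    · intro hg
      have hmem : (⟨∅, {Lit.top}⟩ : Rule (At7 n)) ∈
          reduct (subjReduct (Prog7 n) W) I := by
        apply mem_reduct_of_noNeg (P := subjReduct (Prog7 n) W)
        · have := mem_subjReduct (W := W)
            (r := (⟨∅, {SLit.k (Lit.pos At7.g)}⟩ : ERule (At7 n)))
            (by rw [mem_Prog7]; exact Or.inr (Or.inr (Or.inr rfl)))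
          simpa [SLit.reduce, hg] using this
        · intro L hL
          simp only [Set.mem_singleton_iff] at hL
          subst hL; simp [Lit.isNeg]
      have := h _ hmem (by intro L hL; simp only [Set.mem_singleton_iff] at hL; subst hL; trivial)
      simp at this
  · rintro ⟨h1, h2, h3, h4⟩ r' hr'
    obtain ⟨r1, hr1, hcond, rfl⟩ := hr'
    obtain ⟨r, hrP, rfl⟩ := hr1
    rw [mem_Prog7] at hrP
    rcases hrP with ⟨i, rfl⟩ | ⟨i, rfl⟩ | ⟨i, rfl⟩ | rfl
    · -- a i ← (¬K na_i reduced)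
      by_cases hs : satK W (Lit.pos (At7.na i))
      · intro hb
        exfalso
        have : Lit.sat J (Lit.bot) := by
          apply hb
          simp [SLit.reduce, hs, Lit.isNeg]
        exact this
      · intro _
        exact ⟨At7.a i, rfl, h1 i hs⟩
    · -- na i ← ¬ a i
      intro _
      refine ⟨At7.na i, rfl, h2 i ?_⟩
      have := hcond (Lit.neg (At7.a i)) (by simp [SLit.reduce]) (by simp [Lit.isNeg])
      exact this
    · -- g ← a i
      intro hb
      have hai : At7.a i ∈ J := by
        have := hb (Lit.pos (At7.a i)) (by simp [SLit.reduce, Lit.isNeg])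
        exact this
      exact ⟨At7.g, rfl, h3 i hai⟩
    · -- ⊥ ← K g (reduced to ⊥ since ¬ satK W g)
      intro hb
      exfalso
      have : Lit.sat J (Lit.bot) := by
        apply hb
        simp [SLit.reduce, h4, Lit.isNeg]
      exact this

end Prog7Aux

namespace Prog7Aux

/-- Characterization of stable models of the subjective reduct of `Prog7`. -/
lemma mem_SM_iff {n : ℕ} (W : Set (Set (At7 n))) (I : Set (At7 n)) :
    I ∈ SM (subjReduct (Prog7 n) W) ↔
      (¬ satK W (Lit.pos At7.g) ∧ I = MA n W) := by
  constructor
  · rintro ⟨hmod, hmin⟩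
    rw [model_iff] at hmod
    obtain ⟨h1, h2, h3, h4⟩ := hmod
    refine ⟨h4, ?_⟩
    -- the least model of the reduct w.r.t. I
    set MI : Set (At7 n) :=
      {x | (∃ i : Fin n, ¬ satK W (Lit.pos (At7.na i)) ∧ x = At7.a i) ∨
           (∃ i : Fin n, At7.a i ∉ I ∧ x = At7.na i) ∨
           (x = At7.g ∧ ∃ i : Fin n, ¬ satK W (Lit.pos (At7.na i)))} with hMI
    have hsub : MI ⊆ I := by
      rintro x (⟨i, hns, rfl⟩ | ⟨i, hai, rfl⟩ | ⟨rfl, i, hns⟩)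
      · exact h1 i hns
      · exact h2 i hai
      · exact h3 i (h1 i hns)
    have hmodMI : isModel MI (reduct (subjReduct (Prog7 n) W) I) := by
      rw [model_iff]
      refine ⟨fun i hns => Or.inl ⟨i, hns, rfl⟩, fun i hai => Or.inr (Or.inl ⟨i, hai, rfl⟩), ?_, h4⟩
      intro i hai
      rcases hai with ⟨j, hns, hj⟩ | ⟨j, _, hj⟩ | ⟨hj, _⟩
      · exact Or.inr (Or.inr ⟨rfl, j, hns⟩)
      · exact absurd hj (by simp)
      · exact absurd hj (by simp)
    have hIeq : MI = I := hmin MI hsub hmodMI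
    have haI : ∀ i : Fin n, At7.a i ∈ I ↔ ¬ satK W (Lit.pos (At7.na i)) := by
      intro i
      rw [← hIeq]
      simp [hMI]
    ext x
    rw [← hIeq]
    constructor
    · rintro (⟨i, hns, rfl⟩ | ⟨i, hai, rfl⟩ | ⟨rfl, i, hns⟩)
      · exact Or.inl ⟨i, hns, rfl⟩
      · refine Or.inr (Or.inl ⟨i, ?_, rfl⟩)
        by_contra hs
        exact hai ((haI i).2 hs)
      · exact Or.inr (Or.inr ⟨rfl, i, hns⟩)
    · rintro (⟨i, hns, rfl⟩ | ⟨i, hs, rfl⟩ | ⟨rfl, i, hns⟩)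
      · exact Or.inl ⟨i, hns, rfl⟩
      · refine Or.inr (Or.inl ⟨i, ?_, rfl⟩)
        intro hai
        exact (haI i).1 hai hs
      · exact Or.inr (Or.inr ⟨rfl, i, hns⟩)
  · rintro ⟨h4, rfl⟩
    constructor
    · rw [model_iff]
      refine ⟨fun i hns => mem_a_MA.2 hns, ?_, ?_, h4⟩
      · intro i hai
        exact mem_na_MA.2 (by by_contra hs; exact hai (mem_a_MA.2 hs))
      · intro i hai
        exact mem_g_MA.2 ⟨i, mem_a_MA.1 hai⟩
    · intro J hJ hmodJ
      rw [model_iff] at hmodJ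
      obtain ⟨h1, h2, h3, _⟩ := hmodJ
      apply Set.Subset.antisymm hJ
      rintro x (⟨i, hns, rfl⟩ | ⟨i, hs, rfl⟩ | ⟨rfl, i, hns⟩)
      · exact h1 i hns
      · exact h2 i (fun hai => (mem_a_MA.1 hai) hs)
      · exact h3 i (h1 i hns)

end Prog7Aux

/-- the unique worldview of `Prog7 n` is the singleton containing
the interpretation making all `n_aᵢ` true and all `aᵢ` and `g` false. -/
theorem unique_worldview_prog7 (n : ℕ) (W : Set (Set (At7 n))) :
    isWorldview (Prog7 n) W ↔
      W = {{ x : At7 n | ∃ i : Fin n, x = At7.na i }} := by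
  constructor
  · rintro ⟨hne, hW⟩
    obtain ⟨I, hI⟩ := hne
    have hI' : I ∈ SM (subjReduct (Prog7 n) W) := hW ▸ hI
    obtain ⟨hg, hIeq⟩ := (Prog7Aux.mem_SM_iff W I).1 hI'
    have hWsing : W = {Prog7Aux.MA n W} := by
      ext J
      constructor
      · intro hJ
        have := (Prog7Aux.mem_SM_iff W J).1 (hW ▸ hJ)
        exact this.2
      · rintro rfl
        have h := (Prog7Aux.mem_SM_iff W (Prog7Aux.MA n W)).2 ⟨hg, rfl⟩
        rwa [← hW] at h
    -- g must not be known, so no i has ¬ satK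
    have hall : ∀ i : Fin n, satK W (Lit.pos (At7.na i)) := by
      intro i
      by_contra hs
      apply hg
      intro J hJ
      rw [hWsing] at hJ
      rcases hJ with rfl
      exact Prog7Aux.mem_g_MA.2 ⟨i, hs⟩
    have hMA : Prog7Aux.MA n W = { x : At7 n | ∃ i : Fin n, x = At7.na i } := by
      ext x
      constructor
      · rintro (⟨i, hns, rfl⟩ | ⟨i, _, rfl⟩ | ⟨rfl, i, hns⟩)
        · exact absurd (hall i) hns
        · exact ⟨i, rfl⟩
        · exact absurd (hall i) hns
      · rintro ⟨i, rfl⟩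
        exact Or.inr (Or.inl ⟨i, hall i, rfl⟩)
    rw [hWsing, hMA]
  · rintro rfl
    set N : Set (At7 n) := { x : At7 n | ∃ i : Fin n, x = At7.na i } with hN
    have hsatna : ∀ i : Fin n, satK ({N} : Set (Set (At7 n))) (Lit.pos (At7.na i)) := by
      intro i J hJ
      rcases hJ with rfl
      exact ⟨i, rfl⟩
    have hsatg : ¬ satK ({N} : Set (Set (At7 n))) (Lit.pos At7.g) := by
      intro h
      have := h N rfl
      obtain ⟨i, hi⟩ := this
      exact absurd hi (by simp)
    have hMA : Prog7Aux.MA n {N} = N := by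
      ext x
      constructor
      · rintro (⟨i, hns, rfl⟩ | ⟨i, _, rfl⟩ | ⟨rfl, i, hns⟩)
        · exact absurd (hsatna i) hns
        · exact ⟨i, rfl⟩
        · exact absurd (hsatna i) hns
      · rintro ⟨i, rfl⟩
        exact Or.inr (Or.inl ⟨i, hsatna i, rfl⟩)
    refine ⟨⟨N, rfl⟩, ?_⟩
    ext J
    rw [Prog7Aux.mem_SM_iff]
    constructor
    · rintro rfl
      exact ⟨hsatg, hMA.symm⟩
    · rintro ⟨_, rfl⟩
      rw [hMA]; rfl
end

section
/- Let Π be an epistemic program and W a set of interpretations. Then the stable models of the tester program T₀(Π) under the assumption k(W) are exactly the sets M ∪ k(W) for M a stable model of the subjective reduct Π^W; consequently SM(Π^W) equals the restriction of SM(T₀(Π); k(W)) to the atoms of Π. -/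
section Aux

variable {α : Type}

private lemma isModel_reduct_iff {β : Type} {Q : Program β} {I J : Set β} :
    isModel J (reduct Q I) ↔
      ∀ r ∈ Q, (∀ L ∈ r.body, L.isNeg → L.sat I) →
        (∀ L ∈ r.body, ¬ L.isNeg → L.sat J) → ∃ a ∈ r.head, a ∈ J := by
  constructor
  · intro h r hr hneg hbody
    exact h ⟨r.head, {L | L ∈ r.body ∧ ¬ L.isNeg}⟩ ⟨r, hr, hneg, rfl⟩
      (fun L hL => hbody L hL.1 hL.2)
  · rintro h r' ⟨r, hr, hneg, rfl⟩ hb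
    exact h r hr hneg (fun L hL hLn => hb L ⟨hL, hLn⟩)

private lemma reduct_union {β : Type} {Q1 Q2 : Program β} {I : Set β} :
    reduct (Q1 ∪ Q2) I = reduct Q1 I ∪ reduct Q2 I := by
  ext r'
  constructor
  · rintro ⟨r, hr | hr, h⟩
    exacts [Or.inl ⟨r, hr, h⟩, Or.inr ⟨r, hr, h⟩]
  · rintro (⟨r, hr, h⟩ | ⟨r, hr, h⟩)
    exacts [⟨r, Or.inl hr, h⟩, ⟨r, Or.inr hr, h⟩]

private lemma isModel_union {β : Type} {Q1 Q2 : Program β} {J : Set β} :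
    isModel J (Q1 ∪ Q2) ↔ isModel J Q1 ∧ isModel J Q2 := by
  constructor
  · intro h
    exact ⟨fun r hr => h r (Or.inl hr), fun r hr => h r (Or.inr hr)⟩
  · rintro ⟨h1, h2⟩ r (hr | hr)
    exacts [h1 r hr, h2 r hr]

private lemma kOfW_iff_satK {P : EProgram α} {W : Set (Set α)} {a : α}
    (ha : a ∈ KAtoms P) : a ∈ kOfW P W ↔ satK W (Lit.pos a) := by
  simp [kOfW, satK, Lit.sat, ha]

/-- The objective part `k(Π)` of the tester program. -/
private def transP (P : EProgram α) : Program (α ⊕ α) :=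
  (fun r : ERule α => (⟨Sum.inl '' r.head, SLit.t0 '' r.body⟩ : Rule (α ⊕ α))) '' P

/-- The choice-rule part of the tester program. -/
private def choiceP (P : EProgram α) : Program (α ⊕ α) :=
  (fun a => (⟨{Sum.inr a}, {Lit.nneg (Sum.inr a)}⟩ : Rule (α ⊕ α))) '' KAtoms P

private lemma T0_eq (P : EProgram α) : T0 P = transP P ∪ choiceP P := rfl

private lemma lit_corr {P : EProgram α} {W : Set (Set α)} {M J : Set (α ⊕ α)}
    (hM : ∀ a ∈ KAtoms P, (Sum.inr a ∈ M ↔ a ∈ kOfW P W))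
    (hJ : ∀ a ∈ KAtoms P, (Sum.inr a ∈ J ↔ a ∈ kOfW P W))
    {L : SLit α} (hL : L.isNormal)
    (hA : ∀ a : α, L = SLit.k (Lit.pos a) ∨ L = SLit.nk (Lit.pos a) ∨
          L = SLit.nnk (Lit.pos a) → a ∈ KAtoms P) :
    (((L.t0).isNeg → (L.t0).sat M) ∧ (¬ (L.t0).isNeg → (L.t0).sat J))
    ↔ (((SLit.reduce W L).isNeg → (SLit.reduce W L).sat (restr M)) ∧
       (¬ (SLit.reduce W L).isNeg → (SLit.reduce W L).sat (restr J))) := by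
  cases L with
  | obj l =>
    cases l <;> simp [SLit.t0, SLit.reduce, Lit.map, Lit.isNeg, Lit.sat, restr]
  | k l =>
    cases l with
    | pos a =>
      have ha := hA a (Or.inl rfl)
      have hk := (kOfW_iff_satK (W := W) ha)
      have hj := hJ a ha
      by_cases hs : satK W (Lit.pos a) <;>
        simp [SLit.t0, SLit.reduce, Lit.isNeg, Lit.sat, hs, hj, hk]
    | neg a => exact absurd hL (by simp [SLit.isNormal])
    | nneg a => exact absurd hL (by simp [SLit.isNormal])
    | top => exact absurd hL (by simp [SLit.isNormal])
    | bot => exact absurd hL (by simp [SLit.isNormal])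
  | nk l =>
    cases l with
    | pos a =>
      have ha := hA a (Or.inr (Or.inl rfl))
      have hk := (kOfW_iff_satK (W := W) ha)
      have hm := hM a ha
      by_cases hs : satK W (Lit.pos a) <;>
        simp [SLit.t0, SLit.reduce, Lit.isNeg, Lit.sat, hs, hm, hk]
    | neg a => exact absurd hL (by simp [SLit.isNormal])
    | nneg a => exact absurd hL (by simp [SLit.isNormal])
    | top => exact absurd hL (by simp [SLit.isNormal])
    | bot => exact absurd hL (by simp [SLit.isNormal])
  | nnk l =>
    cases l with
    | pos a =>
      have ha := hA a (Or.inr (Or.inr rfl))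
      have hk := (kOfW_iff_satK (W := W) ha)
      have hm := hM a ha
      by_cases hs : satK W (Lit.pos a) <;>
        simp [SLit.t0, SLit.reduce, Lit.isNeg, Lit.sat, hs, hm, hk]
    | neg a => exact absurd hL (by simp [SLit.isNormal])
    | nneg a => exact absurd hL (by simp [SLit.isNormal])
    | top => exact absurd hL (by simp [SLit.isNormal])
    | bot => exact absurd hL (by simp [SLit.isNormal])

private lemma model_trans_iff {P : EProgram α} (hnf : isNormalForm P) {W : Set (Set α)}
    {M J : Set (α ⊕ α)}
    (hM : ∀ a ∈ KAtoms P, (Sum.inr a ∈ M ↔ a ∈ kOfW P W))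
    (hJ : ∀ a ∈ KAtoms P, (Sum.inr a ∈ J ↔ a ∈ kOfW P W)) :
    isModel J (reduct (transP P) M) ↔
      isModel (restr J) (reduct (subjReduct P W) (restr M)) := by
  rw [isModel_reduct_iff, isModel_reduct_iff]
  simp only [transP, subjReduct, Set.forall_mem_image, Set.exists_mem_image]
  refine forall₂_congr fun r hr => ?_
  have hcorr : ∀ L ∈ r.body,
      (((SLit.t0 L).isNeg → (SLit.t0 L).sat M) ∧
        (¬ (SLit.t0 L).isNeg → (SLit.t0 L).sat J))
      ↔ (((SLit.reduce W L).isNeg → (SLit.reduce W L).sat (restr M)) ∧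
         (¬ (SLit.reduce W L).isNeg → (SLit.reduce W L).sat (restr J))) := by
    intro L hL
    refine lit_corr hM hJ (hnf r hr L hL) ?_
    rintro a (rfl | rfl | rfl)
    · exact ⟨r, hr, Or.inl hL⟩
    · exact ⟨r, hr, Or.inr (Or.inl hL)⟩
    · exact ⟨r, hr, Or.inr (Or.inr hL)⟩
  constructor
  · intro h h1 h2
    refine h ?_ ?_
    · intro L hL hn
      exact ((hcorr L hL).mpr ⟨h1 hL, h2 hL⟩).1 hn
    · intro L hL hn
      exact ((hcorr L hL).mpr ⟨h1 hL, h2 hL⟩).2 hn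
  · intro h h1 h2
    refine h ?_ ?_
    · intro L hL hn
      exact ((hcorr L hL).mp ⟨h1 hL, h2 hL⟩).1 hn
    · intro L hL hn
      exact ((hcorr L hL).mp ⟨h1 hL, h2 hL⟩).2 hn

private lemma model_choice_iff {P : EProgram α} {M J : Set (α ⊕ α)} :
    isModel J (reduct (choiceP P) M) ↔
      ∀ a ∈ KAtoms P, Sum.inr a ∈ M → Sum.inr a ∈ J := by
  rw [isModel_reduct_iff]
  simp [choiceP, Set.forall_mem_image, Lit.isNeg, Lit.sat]

private lemma model_C1_iff {β : Type} {S : Set β} {M J : Set β} :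
    isModel J (reduct ((fun b => (⟨∅, {Lit.neg b}⟩ : Rule β)) '' S) M) ↔
      ∀ b ∈ S, b ∈ M := by
  rw [isModel_reduct_iff]
  simp [Set.forall_mem_image, Lit.isNeg, Lit.sat]

private lemma model_C2_iff {β : Type} {S : Set β} {M J : Set β} :
    isModel J (reduct ((fun b => (⟨∅, {Lit.pos b}⟩ : Rule β)) '' S) M) ↔
      ∀ b ∈ S, b ∉ J := by
  rw [isModel_reduct_iff]
  simp [Set.forall_mem_image, Lit.isNeg, Lit.sat]

private lemma model_TW_iff {P : EProgram α} {W : Set (Set α)} {M J : Set (α ⊕ α)} :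
    isModel J (reduct (withAssumption (T0 P) (asmP P (kOfW P W)) (asmN P (kOfW P W))) M) ↔
      (isModel J (reduct (transP P) M)
       ∧ (∀ a ∈ KAtoms P, Sum.inr a ∈ M → Sum.inr a ∈ J)
       ∧ (∀ b ∈ asmP P (kOfW P W), b ∈ M)
       ∧ (∀ b ∈ asmN P (kOfW P W), b ∉ J)) := by
  rw [withAssumption, T0_eq, reduct_union, reduct_union, reduct_union,
      isModel_union, isModel_union, isModel_union,
      model_choice_iff, model_C1_iff, model_C2_iff]
  tauto

end Aux

/-- the stable models of `T₀(Π)` under the assumption `k(W)` are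
exactly the sets `M ∪ k(W)` for `M ∈ SM(Π^W)`; consequently `SM(Π^W)` equals
the restriction of `SM(T₀(Π); k(W))` to the atoms of `Π`. -/
theorem T0_behaves_as_subjective_reduct {α : Type} (P : EProgram α)
    (hfin : P.Finite) (hnf : isNormalForm P) (W : Set (Set α)) :
    SMA (T0 P) (asmP P (kOfW P W)) (asmN P (kOfW P W))
        = (fun N : Set α => Sum.inl '' N ∪ Sum.inr '' kOfW P W) '' SM (subjReduct P W)
    ∧ SM (subjReduct P W)
        = restr '' SMA (T0 P) (asmP P (kOfW P W)) (asmN P (kOfW P W)) := by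
  have hre : ∀ N' : Set α, restr (Sum.inl '' N' ∪ Sum.inr '' kOfW P W) = N' := by
    intro N'
    ext a
    simp [restr]
  have h1 : SMA (T0 P) (asmP P (kOfW P W)) (asmN P (kOfW P W))
      = (fun N : Set α => Sum.inl '' N ∪ Sum.inr '' kOfW P W) '' SM (subjReduct P W) := by
    ext M
    simp only [SMA, SM, Set.mem_setOf_eq, Set.mem_image]
    constructor
    · rintro ⟨hmod, hmin⟩
      obtain ⟨hT, hCh, hC1, hC2⟩ := model_TW_iff.mp hmod
      have hC1' : ∀ a ∈ kOfW P W, Sum.inr a ∈ M := fun a ha =>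
        hC1 _ ⟨a, ⟨ha, ha.1⟩, rfl⟩
      have hC2' : ∀ a ∈ KAtoms P, a ∉ kOfW P W → Sum.inr a ∉ M := fun a ha hna =>
        hC2 _ ⟨a, ⟨ha, hna⟩, rfl⟩
      have hMK : ∀ a ∈ KAtoms P, (Sum.inr a ∈ M ↔ a ∈ kOfW P W) := by
        intro a ha
        constructor
        · intro hm
          by_contra hn
          exact hC2' a ha hn hm
        · exact hC1' a
      have hjunk : ∀ a, Sum.inr a ∈ M → a ∈ KAtoms P := by
        intro a0 hm0
        by_contra hna
        set J : Set (α ⊕ α) := {x ∈ M | ∀ a, x = Sum.inr a → a ∈ KAtoms P} with hJdef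
        have hJsub : J ⊆ M := fun x hx => hx.1
        have hrJ : restr J = restr M := by
          ext a
          constructor
          · intro h
            exact h.1
          · intro h
            exact ⟨h, fun b hb => (Sum.inl_ne_inr hb).elim⟩
        have hJK : ∀ a ∈ KAtoms P, (Sum.inr a ∈ J ↔ a ∈ kOfW P W) := by
          intro a ha
          constructor
          · intro hj
            exact (hMK a ha).mp hj.1
          · intro hk
            exact ⟨hC1' a hk, fun b hb => (Sum.inr.inj hb) ▸ ha⟩
        have hJmod : isModel J (reduct (withAssumption (T0 P)
            (asmP P (kOfW P W)) (asmN P (kOfW P W))) M) := by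
          refine model_TW_iff.mpr ⟨?_, ?_, hC1, ?_⟩
          · refine (model_trans_iff hnf hMK hJK).mpr ?_
            rw [hrJ]
            exact (model_trans_iff hnf hMK hMK).mp hT
          · intro a ha hm
            exact ⟨hm, fun b hb => (Sum.inr.inj hb) ▸ ha⟩
          · intro b hb hbJ
            exact hC2 b hb (hJsub hbJ)
        have hEq : J = M := hmin J hJsub hJmod
        exact hna (((hEq.symm ▸ hm0) : Sum.inr a0 ∈ J).2 a0 rfl)
      have hMfull : ∀ a, Sum.inr a ∈ M ↔ a ∈ kOfW P W := fun a =>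
        ⟨fun hm => (hMK a (hjunk a hm)).mp hm, fun hk => hC1' a hk⟩
      have hMeq : M = Sum.inl '' (restr M) ∪ Sum.inr '' kOfW P W := by
        ext x
        cases x with
        | inl a => simp [restr]
        | inr a => simp [restr, hMfull a]
      refine ⟨restr M, ⟨(model_trans_iff hnf hMK hMK).mp hT, ?_⟩, hMeq.symm⟩
      intro J0 hsub hmod0
      set J : Set (α ⊕ α) := Sum.inl '' J0 ∪ Sum.inr '' kOfW P W with hJdef
      have hrJ : restr J = J0 := hre J0
      have hJsub : J ⊆ M := by
        rintro x (⟨a, ha, rfl⟩ | ⟨a, ha, rfl⟩)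
        · exact hsub ha
        · exact hC1' a ha
      have hJK : ∀ a ∈ KAtoms P, (Sum.inr a ∈ J ↔ a ∈ kOfW P W) := by
        intro a ha
        constructor
        · intro hj
          exact (hMfull a).mp (hJsub hj)
        · intro hk
          exact Or.inr ⟨a, hk, rfl⟩
      have hJmod : isModel J (reduct (withAssumption (T0 P)
          (asmP P (kOfW P W)) (asmN P (kOfW P W))) M) := by
        refine model_TW_iff.mpr ⟨?_, ?_, hC1, ?_⟩
        · refine (model_trans_iff hnf hMK hJK).mpr ?_
          rw [hrJ]
          exact hmod0
        · intro a ha hm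
          exact Or.inr ⟨a, (hMfull a).mp hm, rfl⟩
        · rintro b ⟨a, ⟨ha, hna⟩, rfl⟩ hbJ
          exact hna ((hJK a ha).mp hbJ)
      have hEq : J = M := hmin J hJsub hJmod
      rw [← hrJ, hEq]
    · rintro ⟨N, ⟨hNmod, hNmin⟩, rfl⟩
      have hrM : restr (Sum.inl '' N ∪ Sum.inr '' kOfW P W) = N := hre N
      set M : Set (α ⊕ α) := Sum.inl '' N ∪ Sum.inr '' kOfW P W with hMdef
      have hMfull : ∀ a, Sum.inr a ∈ M ↔ a ∈ kOfW P W := by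
        intro a
        simp [hMdef]
      have hMK : ∀ a ∈ KAtoms P, (Sum.inr a ∈ M ↔ a ∈ kOfW P W) :=
        fun a _ => hMfull a
      constructor
      · refine model_TW_iff.mpr ⟨?_, fun a _ h => h, ?_, ?_⟩
        · refine (model_trans_iff hnf hMK hMK).mpr ?_
          rw [hrM]
          exact hNmod
        · rintro b ⟨a, ⟨ha, _⟩, rfl⟩
          exact Or.inr ⟨a, ha, rfl⟩
        · rintro b ⟨a, ⟨haK, hna⟩, rfl⟩ hmem
          exact hna ((hMfull a).mp hmem)
      · intro J hsub hmodJ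
        obtain ⟨hTJ, hChJ, _, _⟩ := model_TW_iff.mp hmodJ
        have hJK : ∀ a ∈ KAtoms P, (Sum.inr a ∈ J ↔ a ∈ kOfW P W) := by
          intro a ha
          constructor
          · intro hj
            exact (hMfull a).mp (hsub hj)
          · intro hk
            exact hChJ a ha ((hMfull a).mpr hk)
        have hJ0mod : isModel (restr J) (reduct (subjReduct P W) N) := by
          rw [← hrM]
          exact (model_trans_iff hnf hMK hJK).mp hTJ
        have hJ0sub : restr J ⊆ N := by
          intro a haJ
          have : Sum.inl a ∈ M := hsub haJ
          rw [← hrM]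
          exact this
        have hJ0 : restr J = N := hNmin (restr J) hJ0sub hJ0mod
        ext x
        cases x with
        | inl a =>
          constructor
          · intro h
            exact hsub h
          · intro h
            have : a ∈ N := by
              rw [← hrM]
              exact h
            rw [← hJ0] at this
            exact this
        | inr a =>
          constructor
          · intro h
            exact hsub h
          · intro h
            have hk := (hMfull a).mp h
            exact hChJ a hk.1 h
  refine ⟨h1, ?_⟩
  rw [h1, ← Set.image_comp]
  ext N
  simp only [Set.mem_image, Function.comp]
  constructor
  · intro hN
    exact ⟨N, hN, hre N⟩
  · rintro ⟨N', hN', rfl⟩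
    rw [hre N']
    exact hN'
end

section
/- T₀(Π) is a tester program for any epistemic program Π in normal form: a non-empty set of interpretations W is a worldview of Π if and only if W equals the restriction to At(Π) of the stable models of T₀(Π) under the assumption k(W). -/
namespace T0TesterProof

variable {α : Type}

/-- combine an objective part and a k-part into one interpretation -/
def emb (I S : Set α) : Set (α ⊕ α) := Sum.inl '' I ∪ Sum.inr '' S

@[simp] lemma inl_mem_emb {I S : Set α} {a : α} : Sum.inl a ∈ emb I S ↔ a ∈ I := by
  simp [emb]

@[simp] lemma inr_mem_emb {I S : Set α} {a : α} : Sum.inr a ∈ emb I S ↔ a ∈ S := by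
  simp [emb]

@[simp] lemma restr_emb (I S : Set α) : restr (emb I S) = I := by
  ext a; simp [restr]

lemma emb_subset {I I' S : Set α} (h : I ⊆ I') : emb I S ⊆ emb I' S := by
  intro x hx
  rcases x with a | a
  · simp only [inl_mem_emb] at hx ⊢; exact h hx
  · simpa using hx

lemma mem_S_satK {P : EProgram α} {W : Set (Set α)} {a : α}
    (h : a ∈ kOfW P W) : satK W (Lit.pos a) := fun I hI => h.2 I hI

lemma satK_mem_S {P : EProgram α} {W : Set (Set α)} {a : α}
    (ha : a ∈ KAtoms P) (h : satK W (Lit.pos a)) : a ∈ kOfW P W :=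
  ⟨ha, fun I hI => h I hI⟩

lemma k_mem_KAtoms {P : EProgram α} {r : ERule α} (hr : r ∈ P) {a : α}
    (h : SLit.k (Lit.pos a) ∈ r.body) : a ∈ KAtoms P := ⟨r, hr, Or.inl h⟩

lemma nk_mem_KAtoms {P : EProgram α} {r : ERule α} (hr : r ∈ P) {a : α}
    (h : SLit.nk (Lit.pos a) ∈ r.body) : a ∈ KAtoms P := ⟨r, hr, Or.inr (Or.inl h)⟩

lemma nnk_mem_KAtoms {P : EProgram α} {r : ERule α} (hr : r ∈ P) {a : α}
    (h : SLit.nnk (Lit.pos a) ∈ r.body) : a ∈ KAtoms P := ⟨r, hr, Or.inr (Or.inr h)⟩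

/-- The central model correspondence. -/
lemma corr (P : EProgram α) (hnf : isNormalForm P) (W : Set (Set α)) (I J' : Set α) :
    isModel (emb J' (kOfW P W))
      (reduct (withAssumption (T0 P) (asmP P (kOfW P W)) (asmN P (kOfW P W)))
        (emb I (kOfW P W)))
    ↔ isModel J' (reduct (subjReduct P W) I) := by
  set S := kOfW P W with hS
  constructor
  · -- T0 model implies subjective-reduct model
    intro h r' hr'
    obtain ⟨r0, hr0, hneg, rfl⟩ := hr'
    obtain ⟨r, hrP, rfl⟩ := hr0
    intro hbody
    -- the translated rule
    have htrQ : (⟨Sum.inl '' r.head, SLit.t0 '' r.body⟩ : Rule (α ⊕ α)) ∈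
        withAssumption (T0 P) (asmP P S) (asmN P S) := by
      simp only [withAssumption, T0, Set.mem_union]
      exact Or.inl (Or.inl (Or.inl ⟨r, hrP, rfl⟩))
    -- survival of the translated rule w.r.t. emb I S
    have hsurv : ∀ L ∈ SLit.t0 '' r.body, L.isNeg → L.sat (emb I S) := by
      rintro L ⟨L0, hL0, rfl⟩ hneg'
      have hnorm := hnf r hrP L0 hL0
      rcases L0 with l | l | l | l
      · rcases l with a | a | a | _ | _
        · simp [SLit.t0, Lit.map, Lit.isNeg] at hneg'
        · -- obj neg a
          have := hneg (SLit.reduce W (SLit.obj (Lit.neg a)))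
            ⟨SLit.obj (Lit.neg a), hL0, rfl⟩ (by simp [SLit.reduce, Lit.isNeg])
          simpa [SLit.t0, Lit.map, Lit.sat, SLit.reduce] using this
        · have := hneg (SLit.reduce W (SLit.obj (Lit.nneg a)))
            ⟨SLit.obj (Lit.nneg a), hL0, rfl⟩ (by simp [SLit.reduce, Lit.isNeg])
          simpa [SLit.t0, Lit.map, Lit.sat, SLit.reduce] using this
        · simp [SLit.t0, Lit.map, Lit.isNeg] at hneg'
        · simp [SLit.t0, Lit.map, Lit.isNeg] at hneg'
      · rcases l with a | a | a | _ | _ <;> try simp [SLit.isNormal] at hnorm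
        simp [SLit.t0, Lit.isNeg] at hneg'
      · rcases l with a | a | a | _ | _ <;> try simp [SLit.isNormal] at hnorm
        -- nk (pos a) : need a ∉ S
        simp only [SLit.t0, Lit.sat, inr_mem_emb]
        intro haS
        have hsk : satK W (Lit.pos a) := mem_S_satK haS
        have := hbody (SLit.reduce W (SLit.nk (Lit.pos a)))
          ⟨⟨SLit.nk (Lit.pos a), hL0, rfl⟩, by simp [SLit.reduce, hsk, Lit.isNeg]⟩
        simp [SLit.reduce, hsk, Lit.sat] at this
      · rcases l with a | a | a | _ | _ <;> try simp [SLit.isNormal] at hnorm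
        -- nnk (pos a) : need a ∈ S
        simp only [SLit.t0, Lit.sat, inr_mem_emb]
        by_cases hsk : satK W (Lit.pos a)
        · exact satK_mem_S (nnk_mem_KAtoms hrP hL0) hsk
        · have := hbody (SLit.reduce W (SLit.nnk (Lit.pos a)))
            ⟨⟨SLit.nnk (Lit.pos a), hL0, rfl⟩, by simp [SLit.reduce, hsk, Lit.isNeg]⟩
          simp [SLit.reduce, hsk, Lit.sat] at this
    have hsat := h _ ⟨_, htrQ, hsurv, rfl⟩
    have hprem : ∀ L ∈ {L | L ∈ SLit.t0 '' r.body ∧ ¬ L.isNeg}, L.sat (emb J' S) := by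
      rintro L ⟨⟨L0, hL0, rfl⟩, hnn⟩
      have hnorm := hnf r hrP L0 hL0
      rcases L0 with l | l | l | l
      · rcases l with a | a | a | _ | _
        · -- obj pos a
          have := hbody (SLit.reduce W (SLit.obj (Lit.pos a)))
            ⟨⟨SLit.obj (Lit.pos a), hL0, rfl⟩, by simp [SLit.reduce, Lit.isNeg]⟩
          simpa [SLit.t0, Lit.map, Lit.sat, SLit.reduce] using this
        · simp [SLit.t0, Lit.map, Lit.isNeg] at hnn
        · simp [SLit.t0, Lit.map, Lit.isNeg] at hnn
        · simp [SLit.t0, Lit.map, Lit.sat]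
        · -- obj bot
          have := hbody (SLit.reduce W (SLit.obj Lit.bot))
            ⟨⟨SLit.obj Lit.bot, hL0, rfl⟩, by simp [SLit.reduce, Lit.isNeg]⟩
          simp [SLit.reduce, Lit.sat] at this
      · rcases l with a | a | a | _ | _ <;> try simp [SLit.isNormal] at hnorm
        -- k (pos a) : need a ∈ S
        simp only [SLit.t0, Lit.sat, inr_mem_emb]
        by_cases hsk : satK W (Lit.pos a)
        · exact satK_mem_S (k_mem_KAtoms hrP hL0) hsk
        · have := hbody (SLit.reduce W (SLit.k (Lit.pos a)))
            ⟨⟨SLit.k (Lit.pos a), hL0, rfl⟩, by simp [SLit.reduce, hsk, Lit.isNeg]⟩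
          simp [SLit.reduce, hsk, Lit.sat] at this
      · rcases l with a | a | a | _ | _ <;> try simp [SLit.isNormal] at hnorm
        simp [SLit.t0, Lit.isNeg] at hnn
      · rcases l with a | a | a | _ | _ <;> try simp [SLit.isNormal] at hnorm
        simp [SLit.t0, Lit.isNeg] at hnn
    obtain ⟨x, hxh, hxm⟩ := hsat hprem
    obtain ⟨b, hb, rfl⟩ := hxh
    exact ⟨b, hb, inl_mem_emb.mp hxm⟩
  · -- subjective-reduct model implies T0 model
    intro h r' hr'
    obtain ⟨q, hq, hnegq, rfl⟩ := hr'
    simp only [withAssumption, T0, Set.mem_union] at hq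
    rcases hq with ((⟨r, hrP, rfl⟩ | ⟨a, haK, rfl⟩) | ⟨x, hxP, rfl⟩) | ⟨x, hxN, rfl⟩
    · -- translated program rule
      -- the corresponding rule of the subjective reduct survives w.r.t. I
      have hsurvS : ∀ L ∈ SLit.reduce W '' r.body, L.isNeg → L.sat I := by
        rintro L ⟨L0, hL0, rfl⟩ hn
        have hnorm := hnf r hrP L0 hL0
        rcases L0 with l | l | l | l
        · rcases l with a | a | a | _ | _
          · simp [SLit.reduce, Lit.isNeg] at hn
          · have := hnegq (SLit.t0 (SLit.obj (Lit.neg a)))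
              ⟨SLit.obj (Lit.neg a), hL0, rfl⟩ (by simp [SLit.t0, Lit.map, Lit.isNeg])
            simpa [SLit.t0, Lit.map, Lit.sat, SLit.reduce] using this
          · have := hnegq (SLit.t0 (SLit.obj (Lit.nneg a)))
              ⟨SLit.obj (Lit.nneg a), hL0, rfl⟩ (by simp [SLit.t0, Lit.map, Lit.isNeg])
            simpa [SLit.t0, Lit.map, Lit.sat, SLit.reduce] using this
          · simp [SLit.reduce, Lit.isNeg] at hn
          · simp [SLit.reduce, Lit.isNeg] at hn
        all_goals (rcases l with a | a | a | _ | _ <;>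
            try simp [SLit.isNormal] at hnorm)
        all_goals (by_cases hsk : satK W (Lit.pos a) <;>
            simp [SLit.reduce, hsk, Lit.isNeg] at hn)
      have hsubR : (⟨r.head, {L | L ∈ SLit.reduce W '' r.body ∧ ¬ L.isNeg}⟩ : Rule α)
          ∈ reduct (subjReduct P W) I :=
        ⟨⟨r.head, SLit.reduce W '' r.body⟩, ⟨r, hrP, rfl⟩, hsurvS, rfl⟩
      have hsat := h _ hsubR
      intro hb
      have hprem : ∀ L ∈ {L | L ∈ SLit.reduce W '' r.body ∧ ¬ L.isNeg}, L.sat J' := by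
        rintro L ⟨⟨L0, hL0, rfl⟩, hnn⟩
        have hnorm := hnf r hrP L0 hL0
        rcases L0 with l | l | l | l
        · rcases l with a | a | a | _ | _
          · have := hb (SLit.t0 (SLit.obj (Lit.pos a)))
              ⟨⟨SLit.obj (Lit.pos a), hL0, rfl⟩, by simp [SLit.t0, Lit.map, Lit.isNeg]⟩
            simpa [SLit.t0, Lit.map, Lit.sat, SLit.reduce] using this
          · simp [SLit.reduce, Lit.isNeg] at hnn
          · simp [SLit.reduce, Lit.isNeg] at hnn
          · simp [SLit.reduce, Lit.sat]
          · have := hb (SLit.t0 (SLit.obj Lit.bot))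
              ⟨⟨SLit.obj Lit.bot, hL0, rfl⟩, by simp [SLit.t0, Lit.map, Lit.isNeg]⟩
            simp [SLit.t0, Lit.map, Lit.sat] at this
        · rcases l with a | a | a | _ | _ <;> try simp [SLit.isNormal] at hnorm
          -- k (pos a)
          by_cases hsk : satK W (Lit.pos a)
          · simp [SLit.reduce, hsk, Lit.sat]
          · have := hb (SLit.t0 (SLit.k (Lit.pos a)))
              ⟨⟨SLit.k (Lit.pos a), hL0, rfl⟩, by simp [SLit.t0, Lit.isNeg]⟩
            simp only [SLit.t0, Lit.sat, inr_mem_emb] at this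
            exact absurd (mem_S_satK this) hsk
        · rcases l with a | a | a | _ | _ <;> try simp [SLit.isNormal] at hnorm
          -- nk (pos a)
          by_cases hsk : satK W (Lit.pos a)
          · have := hnegq (SLit.t0 (SLit.nk (Lit.pos a)))
              ⟨SLit.nk (Lit.pos a), hL0, rfl⟩ (by simp [SLit.t0, Lit.isNeg])
            simp only [SLit.t0, Lit.sat, inr_mem_emb] at this
            exact absurd (satK_mem_S (nk_mem_KAtoms hrP hL0) hsk) this
          · simp [SLit.reduce, hsk, Lit.sat]
        · rcases l with a | a | a | _ | _ <;> try simp [SLit.isNormal] at hnorm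
          -- nnk (pos a)
          by_cases hsk : satK W (Lit.pos a)
          · simp [SLit.reduce, hsk, Lit.sat]
          · have := hnegq (SLit.t0 (SLit.nnk (Lit.pos a)))
              ⟨SLit.nnk (Lit.pos a), hL0, rfl⟩ (by simp [SLit.t0, Lit.isNeg])
            simp only [SLit.t0, Lit.sat, inr_mem_emb] at this
            exact absurd (mem_S_satK this) hsk
      obtain ⟨b, hbh, hbJ⟩ := hsat hprem
      exact ⟨Sum.inl b, ⟨b, hbh, rfl⟩, inl_mem_emb.mpr hbJ⟩
    · -- choice rule
      have haS : a ∈ S := by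
        have := hnegq (Lit.nneg (Sum.inr a)) rfl (by simp [Lit.isNeg])
        simpa [Lit.sat] using this
      intro _
      exact ⟨Sum.inr a, rfl, inr_mem_emb.mpr haS⟩
    · -- asmP constraint: cannot survive
      obtain ⟨a, haSK, rfl⟩ := hxP
      have := hnegq (Lit.neg (Sum.inr a)) rfl (by simp [Lit.isNeg])
      simp only [Lit.sat, inr_mem_emb] at this
      exact absurd haSK.1 this
    · -- asmN constraint
      obtain ⟨a, haKS, rfl⟩ := hxN
      intro hb
      have := hb (Lit.pos (Sum.inr a)) ⟨rfl, by simp [Lit.isNeg]⟩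
      simp only [Lit.sat, inr_mem_emb] at this
      exact absurd this haKS.2

/-- In a stable model of the assumed tester program, the k-part is exactly `S`. -/
lemma M_char (P : EProgram α) (W : Set (Set α)) {M : Set (α ⊕ α)}
    (hM : M ∈ SM (withAssumption (T0 P) (asmP P (kOfW P W)) (asmN P (kOfW P W))))
    (a : α) : Sum.inr a ∈ M ↔ a ∈ kOfW P W := by
  set S := kOfW P W with hS
  set Q := withAssumption (T0 P) (asmP P S) (asmN P S) with hQ
  constructor
  · intro haM
    by_cases haK : a ∈ KAtoms P
    · by_contra haS
      -- the asmN constraint rules M out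
      have hqQ : (⟨∅, {Lit.pos (Sum.inr a)}⟩ : Rule (α ⊕ α)) ∈ Q := by
        simp only [hQ, withAssumption, Set.mem_union]
        exact Or.inr ⟨Sum.inr a, ⟨a, ⟨haK, haS⟩, rfl⟩, rfl⟩
      have hred : (⟨∅, {L | L ∈ ({Lit.pos (Sum.inr a)} : Set (Lit (α ⊕ α))) ∧ ¬ L.isNeg}⟩ :
          Rule (α ⊕ α)) ∈ reduct Q M := by
        refine ⟨_, hqQ, ?_, rfl⟩
        rintro L rfl hn
        simp [Lit.isNeg] at hn
      have := hM.1 _ hred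
      obtain ⟨x, hx, -⟩ := this (by rintro L ⟨rfl, -⟩; exact haM)
      exact hx
    · -- a not a K-atom: minimality removes inr a
      have hJ : isModel (M \ {Sum.inr a}) (reduct Q M) := by
        rintro r' ⟨q, hq, hnegq, rfl⟩ hbJ
        have hbM : ∀ L ∈ {L | L ∈ q.body ∧ ¬ L.isNeg}, L.sat M := by
          rintro L hL
          have hLs := hbJ L hL
          rcases L with b | b | b | _ | _
          · exact hLs.1
          · exact absurd trivial hL.2
          · exact absurd trivial hL.2
          · trivial
          · exact hLs.elim
        obtain ⟨x, hxh, hxM⟩ := hM.1 _ ⟨q, hq, hnegq, rfl⟩ hbM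
        refine ⟨x, hxh, hxM, ?_⟩
        simp only [hQ, withAssumption, T0, Set.mem_union] at hq
        rcases hq with ((⟨r, hrP, rfl⟩ | ⟨b, hbK, rfl⟩) | ⟨y, hyP, rfl⟩) | ⟨y, hyN, rfl⟩
        · obtain ⟨c, -, rfl⟩ := hxh
          simp
        · simp only [Set.mem_singleton_iff] at hxh
          subst hxh
          simp only [Set.mem_singleton_iff]
          intro hcontra
          exact haK (by rw [Sum.inr.injEq] at hcontra; rwa [hcontra] at hbK)
        · obtain ⟨c, -, rfl⟩ := hyP; exact absurd hxh (Set.notMem_empty x)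
        · obtain ⟨c, -, rfl⟩ := hyN; exact absurd hxh (Set.notMem_empty x)
      have heq := hM.2 _ Set.diff_subset hJ
      rw [← heq] at haM
      simp at haM
  · intro haS
    by_contra haM
    -- the asmP constraint survives and rules M out
    have hqQ : (⟨∅, {Lit.neg (Sum.inr a)}⟩ : Rule (α ⊕ α)) ∈ Q := by
      simp only [hQ, withAssumption, Set.mem_union]
      exact Or.inl (Or.inr ⟨Sum.inr a, ⟨a, ⟨haS, haS.1⟩, rfl⟩, rfl⟩)
    have hred : (⟨∅, {L | L ∈ ({Lit.neg (Sum.inr a)} : Set (Lit (α ⊕ α))) ∧ ¬ L.isNeg}⟩ :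
        Rule (α ⊕ α)) ∈ reduct Q M := by
      refine ⟨_, hqQ, ?_, rfl⟩
      rintro L rfl -
      exact haM
    obtain ⟨x, hx, -⟩ := hM.1 _ hred (by rintro L ⟨rfl, hnn⟩; exact absurd trivial hnn)
    exact hx

/-- Key lemma: restrictions of stable models of the assumed tester equal the
stable models of the subjective reduct. -/
lemma key (P : EProgram α) (hnf : isNormalForm P) (W : Set (Set α)) :
    restr '' SMA (T0 P) (asmP P (kOfW P W)) (asmN P (kOfW P W)) = SM (subjReduct P W) := by
  set S := kOfW P W with hS
  set Q := withAssumption (T0 P) (asmP P S) (asmN P S) with hQ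
  ext I
  constructor
  · rintro ⟨M, hM, rfl⟩
    have hMe : M = emb (restr M) S := by
      ext x
      rcases x with a | a
      · simp [restr]
      · simp only [inr_mem_emb]
        exact M_char P W hM a
    constructor
    · have h1 := hM.1
      rw [hMe] at h1
      exact (corr P hnf W (restr M) (restr M)).mp h1
    · intro J' hJ'sub hJ'mod
      have hJQ : isModel (emb J' S) (reduct Q M) := by
        rw [hMe]
        exact (corr P hnf W (restr M) J').mpr hJ'mod
      have hsub : emb J' S ⊆ M := by
        rw [hMe]; exact emb_subset hJ'sub
      have hEq := hM.2 _ hsub hJQ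
      have := congrArg restr hEq
      simpa using this
  · intro hI
    refine ⟨emb I S, ⟨?_, ?_⟩, by simp⟩
    · exact (corr P hnf W I I).mpr hI.1
    · intro J hJsub hJmod
      -- S-part of J is forced
      have hSJ : ∀ a ∈ S, Sum.inr a ∈ J := by
        intro a haS
        have hqQ : (⟨{Sum.inr a}, {Lit.nneg (Sum.inr a)}⟩ : Rule (α ⊕ α)) ∈ Q := by
          simp only [hQ, withAssumption, T0, Set.mem_union]
          exact Or.inl (Or.inl (Or.inr ⟨a, haS.1, rfl⟩))
        have hred : (⟨{Sum.inr a},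
            {L | L ∈ ({Lit.nneg (Sum.inr a)} : Set (Lit (α ⊕ α))) ∧ ¬ L.isNeg}⟩ :
            Rule (α ⊕ α)) ∈ reduct Q (emb I S) := by
          refine ⟨_, hqQ, ?_, rfl⟩
          rintro L rfl -
          simp only [Lit.sat, inr_mem_emb]
          exact haS
        obtain ⟨x, hx, hxJ⟩ := hJmod _ hred
          (by rintro L ⟨rfl, hnn⟩; exact absurd trivial hnn)
        simp only [Set.mem_singleton_iff] at hx
        exact hx ▸ hxJ
      have hJe : J = emb (restr J) S := by
        ext x
        rcases x with a | a
        · simp [restr]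
        · simp only [inr_mem_emb]
          constructor
          · intro haJ
            have := hJsub haJ
            simpa using this
          · exact hSJ a
      have hrsub : restr J ⊆ I := by
        intro a haJ
        have : Sum.inl a ∈ emb I S := hJsub haJ
        simpa using this
      have hJmod' : isModel (restr J) (reduct (subjReduct P W) I) := by
        have := hJmod
        rw [hJe] at this
        exact (corr P hnf W I (restr J)).mp this
      have : restr J = I := hI.2 _ hrsub hJmod'
      rw [hJe, this]

end T0TesterProof

theorem T0_is_tester' {α : Type} (P : EProgram α) (hfin : P.Finite)
    (hnf : isNormalForm P) :
    ∀ W : Set (Set α), W.Nonempty →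
      (isWorldview P W ↔
        W = restr '' SMA (T0 P) (asmP P (kOfW P W)) (asmN P (kOfW P W))) := by
  intro W hW
  rw [T0TesterProof.key P hnf W]
  exact ⟨fun h => h.2, fun h => ⟨hW, h⟩⟩

/-- `T₀(Π)` is a tester program for any program `Π` in normal
form: a non-empty `W` is a worldview of `Π` iff `W` equals the restriction to
`At(Π)` of the stable models of `T₀(Π)` under the assumption `k(W)`. -/
theorem T0_is_tester {α : Type} (P : EProgram α) (hfin : P.Finite)
    (hnf : isNormalForm P) :
    ∀ W : Set (Set α), W.Nonempty →
      (isWorldview P W ↔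
        W = restr '' SMA (T0 P) (asmP P (kOfW P W)) (asmN P (kOfW P W))) := by
  exact T0_is_tester' P hfin hnf
end

section
/- T₀(Π) is a generator program for Π: (1) for every worldview W of Π there is a stable model M of T₀(Π) with k(W) = k(M) and (M ∩ At(Π)) ∈ W; and (2) for every stable model M of T₀(Π) and every set of interpretations W with k(W) = k(M), the set M ∩ At(Π) is a stable model of the subjective reduct Π^W. -/
namespace T0Gen

variable {α : Type}

lemma mem_lift_inl {X Y : Set α} {b : α} :
    Sum.inl b ∈ Sum.inl '' X ∪ Sum.inr '' Y ↔ b ∈ X := by simp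

lemma mem_lift_inr {X Y : Set α} {a : α} :
    Sum.inr a ∈ Sum.inl '' X ∪ Sum.inr '' Y ↔ a ∈ Y := by simp

lemma decomp (M : Set (α ⊕ α)) :
    M = Sum.inl '' restr M ∪ Sum.inr '' kOfM M := by
  ext x
  cases x with
  | inl b => simp [restr, kOfM]
  | inr a => simp [restr, kOfM]

lemma satK_iff {P : EProgram α} {W : Set (Set α)} {a : α} (ha : a ∈ KAtoms P) :
    satK W (Lit.pos a) ↔ a ∈ kOfW P W := by
  constructor
  · intro h
    exact ⟨ha, fun I hI => h I hI⟩
  · intro h I hI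
    exact h.2 I hI

/-- Key model correspondence between reducts. -/
lemma propA (P : EProgram α) (hnf : isNormalForm P) (W : Set (Set α))
    (S I₀ J : Set α)
    (hS : ∀ a ∈ KAtoms P, (satK W (Lit.pos a) ↔ a ∈ S)) :
    isModel (Sum.inl '' J ∪ Sum.inr '' S)
        (reduct (T0 P) (Sum.inl '' I₀ ∪ Sum.inr '' S))
      ↔ isModel J (reduct (subjReduct P W) I₀) := by
  constructor
  · intro h r' hr'
    obtain ⟨r, hrmem, hneg, rfl⟩ := hr'
    obtain ⟨r₀, hr₀, rfl⟩ := hrmem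
    intro hb
    have hb' : ∀ L ∈ r₀.body, ¬ (SLit.reduce W L).isNeg → (SLit.reduce W L).sat J := by
      intro L hL hn
      exact hb _ ⟨⟨L, hL, rfl⟩, hn⟩
    have hk : ∀ a : α,
        (SLit.k (Lit.pos a) ∈ r₀.body → a ∈ S) ∧
        (SLit.nk (Lit.pos a) ∈ r₀.body → a ∉ S) ∧
        (SLit.nnk (Lit.pos a) ∈ r₀.body → a ∈ S) := by
      intro a
      refine ⟨?_, ?_, ?_⟩
      · intro hmem
        by_contra haS
        have hKA : a ∈ KAtoms P := ⟨r₀, hr₀, Or.inl hmem⟩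
        have hsk : ¬ satK W (Lit.pos a) := fun hs => haS ((hS a hKA).1 hs)
        have h1 := hb' _ hmem (by simp [SLit.reduce, hsk, Lit.isNeg])
        simp [SLit.reduce, hsk, Lit.sat] at h1
      · intro hmem haS
        have hKA : a ∈ KAtoms P := ⟨r₀, hr₀, Or.inr (Or.inl hmem)⟩
        have hsk : satK W (Lit.pos a) := (hS a hKA).2 haS
        have h1 := hb' _ hmem (by simp [SLit.reduce, hsk, Lit.isNeg])
        simp [SLit.reduce, hsk, Lit.sat] at h1
      · intro hmem
        by_contra haS
        have hKA : a ∈ KAtoms P := ⟨r₀, hr₀, Or.inr (Or.inr hmem)⟩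
        have hsk : ¬ satK W (Lit.pos a) := fun hs => haS ((hS a hKA).1 hs)
        have h1 := hb' _ hmem (by simp [SLit.reduce, hsk, Lit.isNeg])
        simp [SLit.reduce, hsk, Lit.sat] at h1
    have hnegT : ∀ L' ∈ SLit.t0 '' r₀.body, L'.isNeg →
        L'.sat (Sum.inl '' I₀ ∪ Sum.inr '' S) := by
      rintro L' ⟨L, hL, rfl⟩ hneg'
      have hnorm := hnf r₀ hr₀ L hL
      cases L with
      | obj l =>
        cases l with
        | pos b => simp [SLit.t0, Lit.map, Lit.isNeg] at hneg'
        | neg b =>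
          have h1 : (Lit.neg b).sat I₀ :=
            hneg _ ⟨SLit.obj (Lit.neg b), hL, rfl⟩ trivial
          exact fun hc => h1 (mem_lift_inl.mp hc)
        | nneg b =>
          have h1 : (Lit.nneg b).sat I₀ :=
            hneg _ ⟨SLit.obj (Lit.nneg b), hL, rfl⟩ trivial
          exact mem_lift_inl.mpr h1
        | top => simp [SLit.t0, Lit.map, Lit.isNeg] at hneg'
        | bot => simp [SLit.t0, Lit.map, Lit.isNeg] at hneg'
      | k l =>
        cases l with
        | pos a => simp [SLit.t0, Lit.isNeg] at hneg'
        | neg a => simp [SLit.isNormal] at hnorm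
        | nneg a => simp [SLit.isNormal] at hnorm
        | top => simp [SLit.isNormal] at hnorm
        | bot => simp [SLit.isNormal] at hnorm
      | nk l =>
        cases l with
        | pos a => exact fun hc => (hk a).2.1 hL (mem_lift_inr.mp hc)
        | neg a => simp [SLit.isNormal] at hnorm
        | nneg a => simp [SLit.isNormal] at hnorm
        | top => simp [SLit.isNormal] at hnorm
        | bot => simp [SLit.isNormal] at hnorm
      | nnk l =>
        cases l with
        | pos a => exact mem_lift_inr.mpr ((hk a).2.2 hL)
        | neg a => simp [SLit.isNormal] at hnorm
        | nneg a => simp [SLit.isNormal] at hnorm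
        | top => simp [SLit.isNormal] at hnorm
        | bot => simp [SLit.isNormal] at hnorm
    have hT0mem : (⟨Sum.inl '' r₀.head, SLit.t0 '' r₀.body⟩ : Rule (α ⊕ α)) ∈ T0 P :=
      Set.mem_union_left _ ⟨r₀, hr₀, rfl⟩
    have hsat' := h _ ⟨_, hT0mem, hnegT, rfl⟩
    have hbody : ∀ L' ∈ {L : Lit (α ⊕ α) | L ∈ SLit.t0 '' r₀.body ∧ ¬ L.isNeg},
        L'.sat (Sum.inl '' J ∪ Sum.inr '' S) := by
      rintro L' ⟨⟨L, hL, rfl⟩, hnneg⟩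
      have hnorm := hnf r₀ hr₀ L hL
      cases L with
      | obj l =>
        cases l with
        | pos b =>
          have h1 : (Lit.pos b).sat J :=
            hb' _ hL (by simp [SLit.reduce, Lit.isNeg])
          exact mem_lift_inl.mpr h1
        | neg b => simp [SLit.t0, Lit.map, Lit.isNeg] at hnneg
        | nneg b => simp [SLit.t0, Lit.map, Lit.isNeg] at hnneg
        | top => exact trivial
        | bot =>
          have h1 : (Lit.bot).sat J := hb' _ hL (by simp [SLit.reduce, Lit.isNeg])
          exact h1.elim
      | k l =>
        cases l with
        | pos a => exact mem_lift_inr.mpr ((hk a).1 hL)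
        | neg a => simp [SLit.isNormal] at hnorm
        | nneg a => simp [SLit.isNormal] at hnorm
        | top => simp [SLit.isNormal] at hnorm
        | bot => simp [SLit.isNormal] at hnorm
      | nk l =>
        cases l with
        | pos a => simp [SLit.t0, Lit.isNeg] at hnneg
        | neg a => simp [SLit.isNormal] at hnorm
        | nneg a => simp [SLit.isNormal] at hnorm
        | top => simp [SLit.isNormal] at hnorm
        | bot => simp [SLit.isNormal] at hnorm
      | nnk l =>
        cases l with
        | pos a => simp [SLit.t0, Lit.isNeg] at hnneg
        | neg a => simp [SLit.isNormal] at hnorm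
        | nneg a => simp [SLit.isNormal] at hnorm
        | top => simp [SLit.isNormal] at hnorm
        | bot => simp [SLit.isNormal] at hnorm
    obtain ⟨x, hx, hxJ'⟩ := hsat' hbody
    obtain ⟨a, haH, rfl⟩ := hx
    exact ⟨a, haH, mem_lift_inl.mp hxJ'⟩
  · intro h r' hr'
    obtain ⟨r, hrmem, hnegT, rfl⟩ := hr'
    rcases hrmem with ⟨r₀, hr₀, rfl⟩ | ⟨a, haK, rfl⟩
    · intro hb
      have hknk : ∀ a : α, SLit.nk (Lit.pos a) ∈ r₀.body → a ∉ S := by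
        intro a hmem hc
        have h1 : (Lit.neg (Sum.inr a : α ⊕ α)).sat (Sum.inl '' I₀ ∪ Sum.inr '' S) :=
          hnegT _ ⟨SLit.nk (Lit.pos a), hmem, rfl⟩ trivial
        exact h1 (mem_lift_inr.mpr hc)
      have hknnk : ∀ a : α, SLit.nnk (Lit.pos a) ∈ r₀.body → a ∈ S := by
        intro a hmem
        have h1 : (Lit.nneg (Sum.inr a : α ⊕ α)).sat (Sum.inl '' I₀ ∪ Sum.inr '' S) :=
          hnegT _ ⟨SLit.nnk (Lit.pos a), hmem, rfl⟩ trivial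
        exact mem_lift_inr.mp h1
      have hO : ∀ L ∈ SLit.reduce W '' r₀.body, L.isNeg → L.sat I₀ := by
        rintro L ⟨L₀, hL₀, rfl⟩ hneg'
        have hnorm := hnf r₀ hr₀ L₀ hL₀
        cases L₀ with
        | obj l =>
          cases l with
          | pos b => simp [SLit.reduce, Lit.isNeg] at hneg'
          | neg b =>
            have h1 : (Lit.neg (Sum.inl b : α ⊕ α)).sat (Sum.inl '' I₀ ∪ Sum.inr '' S) :=
              hnegT _ ⟨SLit.obj (Lit.neg b), hL₀, rfl⟩ trivial
            exact fun hc => h1 (mem_lift_inl.mpr hc)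
          | nneg b =>
            have h1 : (Lit.nneg (Sum.inl b : α ⊕ α)).sat (Sum.inl '' I₀ ∪ Sum.inr '' S) :=
              hnegT _ ⟨SLit.obj (Lit.nneg b), hL₀, rfl⟩ trivial
            exact mem_lift_inl.mp h1
          | top => simp [SLit.reduce, Lit.isNeg] at hneg'
          | bot => simp [SLit.reduce, Lit.isNeg] at hneg'
        | k l =>
          cases l with
          | pos a =>
            by_cases hs : satK W (Lit.pos a) <;>
              simp [SLit.reduce, hs, Lit.isNeg] at hneg'
          | neg a => simp [SLit.isNormal] at hnorm
          | nneg a => simp [SLit.isNormal] at hnorm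
          | top => simp [SLit.isNormal] at hnorm
          | bot => simp [SLit.isNormal] at hnorm
        | nk l =>
          cases l with
          | pos a =>
            by_cases hs : satK W (Lit.pos a) <;>
              simp [SLit.reduce, hs, Lit.isNeg] at hneg'
          | neg a => simp [SLit.isNormal] at hnorm
          | nneg a => simp [SLit.isNormal] at hnorm
          | top => simp [SLit.isNormal] at hnorm
          | bot => simp [SLit.isNormal] at hnorm
        | nnk l =>
          cases l with
          | pos a =>
            by_cases hs : satK W (Lit.pos a) <;>
              simp [SLit.reduce, hs, Lit.isNeg] at hneg'
          | neg a => simp [SLit.isNormal] at hnorm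
          | nneg a => simp [SLit.isNormal] at hnorm
          | top => simp [SLit.isNormal] at hnorm
          | bot => simp [SLit.isNormal] at hnorm
      have hWmem : (⟨r₀.head, SLit.reduce W '' r₀.body⟩ : Rule α) ∈ subjReduct P W :=
        ⟨r₀, hr₀, rfl⟩
      have hW := h _ ⟨_, hWmem, hO, rfl⟩
      have hbodyW : ∀ L ∈ {L : Lit α | L ∈ SLit.reduce W '' r₀.body ∧ ¬ L.isNeg},
          L.sat J := by
        rintro L ⟨⟨L₀, hL₀, rfl⟩, hnn⟩
        have hnorm := hnf r₀ hr₀ L₀ hL₀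
        cases L₀ with
        | obj l =>
          cases l with
          | pos b =>
            have h1 := hb _ ⟨⟨SLit.obj (Lit.pos b), hL₀, rfl⟩,
              by simp [SLit.t0, Lit.map, Lit.isNeg]⟩
            exact mem_lift_inl.mp h1
          | neg b => simp [SLit.reduce, Lit.isNeg] at hnn
          | nneg b => simp [SLit.reduce, Lit.isNeg] at hnn
          | top => exact trivial
          | bot =>
            have h1 := hb _ ⟨⟨SLit.obj Lit.bot, hL₀, rfl⟩,
              by simp [SLit.t0, Lit.map, Lit.isNeg]⟩
            simp [SLit.t0, Lit.map, Lit.sat] at h1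
        | k l =>
          cases l with
          | pos a =>
            by_cases hs : satK W (Lit.pos a)
            · simp [SLit.reduce, hs, Lit.sat]
            · exfalso
              have h1 := hb _ ⟨⟨SLit.k (Lit.pos a), hL₀, rfl⟩,
                by simp [SLit.t0, Lit.isNeg]⟩
              have haS : a ∈ S := mem_lift_inr.mp h1
              exact hs ((hS a ⟨r₀, hr₀, Or.inl hL₀⟩).2 haS)
          | neg a => simp [SLit.isNormal] at hnorm
          | nneg a => simp [SLit.isNormal] at hnorm
          | top => simp [SLit.isNormal] at hnorm
          | bot => simp [SLit.isNormal] at hnorm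
        | nk l =>
          cases l with
          | pos a =>
            have hns : a ∉ S := hknk a hL₀
            have hs : ¬ satK W (Lit.pos a) :=
              fun hs => hns ((hS a ⟨r₀, hr₀, Or.inr (Or.inl hL₀)⟩).1 hs)
            simp [SLit.reduce, hs, Lit.sat]
          | neg a => simp [SLit.isNormal] at hnorm
          | nneg a => simp [SLit.isNormal] at hnorm
          | top => simp [SLit.isNormal] at hnorm
          | bot => simp [SLit.isNormal] at hnorm
        | nnk l =>
          cases l with
          | pos a =>
            have hs : satK W (Lit.pos a) :=
              (hS a ⟨r₀, hr₀, Or.inr (Or.inr hL₀)⟩).2 (hknnk a hL₀)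
            simp [SLit.reduce, hs, Lit.sat]
          | neg a => simp [SLit.isNormal] at hnorm
          | nneg a => simp [SLit.isNormal] at hnorm
          | top => simp [SLit.isNormal] at hnorm
          | bot => simp [SLit.isNormal] at hnorm
      obtain ⟨a, haH, haJ⟩ := hW hbodyW
      exact ⟨Sum.inl a, ⟨a, haH, rfl⟩, mem_lift_inl.mpr haJ⟩
    · intro hb
      have hmem : Sum.inr a ∈ Sum.inl '' I₀ ∪ Sum.inr '' S :=
        hnegT _ rfl trivial
      exact ⟨Sum.inr a, rfl, mem_lift_inr.mpr (mem_lift_inr.mp hmem)⟩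

/-- Choice rules force the assumed `ka`-atoms into every model of the reduct. -/
lemma forcing (P : EProgram α) (S I₀ : Set α) (hSK : S ⊆ KAtoms P)
    (J' : Set (α ⊕ α))
    (hmod : isModel J' (reduct (T0 P) (Sum.inl '' I₀ ∪ Sum.inr '' S))) :
    Sum.inr '' S ⊆ J' := by
  rintro _ ⟨a, haS, rfl⟩
  have hchoice : (⟨{Sum.inr a}, {Lit.nneg (Sum.inr a)}⟩ : Rule (α ⊕ α)) ∈ T0 P :=
    Set.mem_union_right _ ⟨a, hSK haS, rfl⟩
  have hneg : ∀ L ∈ ({Lit.nneg (Sum.inr a)} : Set (Lit (α ⊕ α))), L.isNeg →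
      L.sat (Sum.inl '' I₀ ∪ Sum.inr '' S) := by
    rintro L rfl _
    exact mem_lift_inr.mpr haS
  have hs := hmod _ ⟨_, hchoice, hneg, rfl⟩
  have hbody : ∀ L ∈ {L : Lit (α ⊕ α) |
      L ∈ ({Lit.nneg (Sum.inr a)} : Set (Lit (α ⊕ α))) ∧ ¬ L.isNeg}, L.sat J' := by
    rintro L ⟨rfl, hnn⟩
    exact (hnn trivial).elim
  obtain ⟨x, hx, hxJ⟩ := hs hbody
  rw [Set.mem_singleton_iff] at hx
  subst hx
  exact hxJ

/-- Stability correspondence. -/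
lemma keyIff (P : EProgram α) (hnf : isNormalForm P) (W : Set (Set α)) (I₀ : Set α) :
    isStable (T0 P) (Sum.inl '' I₀ ∪ Sum.inr '' kOfW P W)
      ↔ isStable (subjReduct P W) I₀ := by
  have hSK : kOfW P W ⊆ KAtoms P := fun _ ha => ha.1
  have hS : ∀ a ∈ KAtoms P, (satK W (Lit.pos a) ↔ a ∈ kOfW P W) :=
    fun a ha => satK_iff ha
  constructor
  · rintro ⟨hmod, hmin⟩
    refine ⟨(propA P hnf W _ I₀ I₀ hS).1 hmod, ?_⟩
    intro J hJI hJmod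
    have hJ'sub : Sum.inl '' J ∪ Sum.inr '' kOfW P W ⊆
        Sum.inl '' I₀ ∪ Sum.inr '' kOfW P W :=
      Set.union_subset_union_left _ (Set.image_mono hJI)
    have heq := hmin _ hJ'sub ((propA P hnf W _ I₀ J hS).2 hJmod)
    apply Set.Subset.antisymm hJI
    intro b hb
    have hb2 : Sum.inl b ∈ Sum.inl '' J ∪ Sum.inr '' kOfW P W := by
      rw [heq]
      exact mem_lift_inl.mpr hb
    exact mem_lift_inl.mp hb2
  · rintro ⟨hmod, hmin⟩
    refine ⟨(propA P hnf W _ I₀ I₀ hS).2 hmod, ?_⟩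
    intro J' hJ'M hJ'mod
    have hforce : Sum.inr '' kOfW P W ⊆ J' := forcing P _ I₀ hSK J' hJ'mod
    have hkeq : kOfM J' = kOfW P W := by
      apply Set.Subset.antisymm
      · intro a ha
        have h1 : Sum.inr a ∈ Sum.inl '' I₀ ∪ Sum.inr '' kOfW P W := hJ'M ha
        exact mem_lift_inr.mp h1
      · intro a ha
        exact hforce ⟨a, ha, rfl⟩
    have hdec : J' = Sum.inl '' restr J' ∪ Sum.inr '' kOfW P W := by
      rw [← hkeq]
      exact decomp J'
    have hsub : restr J' ⊆ I₀ := by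
      intro b hb
      have h1 : Sum.inl b ∈ Sum.inl '' I₀ ∪ Sum.inr '' kOfW P W := hJ'M hb
      exact mem_lift_inl.mp h1
    have hJmod : isModel (restr J') (reduct (subjReduct P W) I₀) := by
      apply (propA P hnf W _ I₀ (restr J') hS).1
      rw [← hdec]
      exact hJ'mod
    have heq := hmin _ hsub hJmod
    rw [hdec, heq]

end T0Gen

/-- `T₀(Π)` is a generator program for `Π`. -/
theorem T0_is_generator {α : Type} (P : EProgram α) (hfin : P.Finite)
    (hnf : isNormalForm P) :
    (∀ W : Set (Set α), isWorldview P W →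
        ∃ M ∈ SM (T0 P), kOfM M = kOfW P W ∧ restr M ∈ W)
    ∧ (∀ M ∈ SM (T0 P), ∀ W : Set (Set α),
        kOfW P W = kOfM M → restr M ∈ SM (subjReduct P W)) := by
  classical
  have := hfin
  constructor
  · intro W hW
    obtain ⟨⟨I, hIW⟩, hWeq⟩ := hW
    have hIW' := hIW
    rw [hWeq] at hIW'
    have hIst : isStable (subjReduct P W) I := hIW'
    refine ⟨Sum.inl '' I ∪ Sum.inr '' kOfW P W,
      (T0Gen.keyIff P hnf W I).2 hIst, ?_, ?_⟩
    · ext a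
      simp [kOfM]
    · have hre : restr (Sum.inl '' I ∪ Sum.inr '' kOfW P W) = I := by
        ext b
        simp [restr]
      rw [hre]
      exact hIW
  · intro M hM W hk
    have hMst : isStable (T0 P) M := hM
    have hdec : M = Sum.inl '' restr M ∪ Sum.inr '' kOfW P W := by
      rw [hk]
      exact T0Gen.decomp M
    rw [hdec] at hMst
    exact (T0Gen.keyIff P hnf W (restr M)).1 hMst
end

section
/- Let G(Π) be a generator program and T(Π) a tester program for Π. If W is a worldview of Π, then there exists a stable model M of G(Π) with k(W) = k(M) such that k(M) = {ka ∈ K(Π) : a belongs to every stable model of T(Π) under assumption k(M)}. -/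
/-- if `W` is a worldview of `Π`, then some stable model `M` of
the generator program `G(Π)` with `k(W) = k(M)` satisfies
`k(M) = {ka ∈ K(Π) : a ∈ SMC(T(Π); k(M))}`. -/
theorem generator_tester_completeness {α : Type} (P : EProgram α) (hfin : P.Finite)
    (G T : Program (α ⊕ α)) (hG : isGenerator P G) (hT : isTester P T)
    (W : Set (Set α)) (hW : isWorldview P W) :
    ∃ M ∈ SM G, kOfM M = kOfW P W ∧
      kOfM M = { a | a ∈ KAtoms P ∧
        ∀ N ∈ SMA T (asmP P (kOfM M)) (asmN P (kOfM M)), Sum.inl a ∈ N } := by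
  obtain ⟨M, hM, hk, _⟩ := hG.1 W hW
  refine ⟨M, hM, hk, ?_⟩
  have hWeq := (hT W hW.1).mp hW
  rw [hk]
  ext a
  simp only [kOfW, Set.mem_setOf_eq]
  constructor
  · rintro ⟨ha, h⟩
    refine ⟨ha, fun N hN => ?_⟩
    have : restr N ∈ W := hWeq ▸ ⟨N, hN, rfl⟩
    exact h _ this
  · rintro ⟨ha, h⟩
    refine ⟨ha, fun I hI => ?_⟩
    rw [hWeq] at hI
    obtain ⟨N, hN, rfl⟩ := hI
    exact h N hN
end
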